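/- For every t > 0, every time-labelled ternary tree T compatible with horizon t, every x ≥ 0 and every η > 0, one has P^t_x(T) − P^t_{x−η}(T) ≥ P^t_{x+η}(T) − P^t_x(T). -/

import Mathlib

open MeasureTheory

/-- Density of the normal distribution `N(m, v)` (`v` the variance). -/
noncomputable def gauss (m v x : ℝ) : ℝ :=
  (Real.sqrt (2 * Real.pi * v))⁻¹ * Real.exp (-(x - m) ^ 2 / (2 * v))

/-- The majority-vote probability for three independent Bernoulli votes
with success probabilities `p₁, p₂, p₃`. -/
noncomputable def g3 (p₁ p₂ p₃ : ℝ) : ℝ :=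
  p₁ * p₂ * p₃ + p₁ * p₂ * (1 - p₃) + p₂ * p₃ * (1 - p₁) + p₃ * p₁ * (1 - p₂)

/-- A time-labelled ternary tree: either a leaf, or a branch node carrying a
waiting time `τ` and three subtrees. -/
inductive TTree where
  | leaf : TTree
  | node (τ : ℝ) (T₁ T₂ T₃ : TTree) : TTree

/-- `T.compat t`: all waiting times are positive and along every root-to-leaf path
the waiting times sum to strictly less than the horizon `t` (in particular `t > 0`). -/
def TTree.compat : TTree → ℝ → Prop
  | .leaf, t => 0 < t
  | .node τ T₁ T₂ T₃, t =>
      0 < τ ∧ τ < t ∧ T₁.compat (t - τ) ∧ T₂.compat (t - τ) ∧ T₃.compat (t - τ)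

/-- The voting probability `P^t_z(T)`: recursively, a leaf contributes the probability
that a rate-2 Brownian motion started at `z` is `≥ 0` at time `t`, and a branch node
averages the majority vote of its three subtrees over the position at the branch time. -/
noncomputable def voteP : TTree → ℝ → ℝ → ℝ
  | .leaf, t, z => ∫ y in Set.Ioi (0 : ℝ), gauss z (2 * t) y
  | .node τ T₁ T₂ T₃, t, z =>
      ∫ y : ℝ, g3 (voteP T₁ (t - τ) y) (voteP T₂ (t - τ) y) (voteP T₃ (t - τ) y)
        * gauss z (2 * τ) y

/-! ### Auxiliary facts about the Gaussian density -/

lemma gauss_eq (z v y : ℝ) : gauss z v y = gauss 0 v (y - z) := by simp [gauss]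

lemma gauss_even (v y : ℝ) : gauss 0 v (-y) = gauss 0 v y := by
  simp [gauss, neg_pow]

lemma gauss_nonneg (m v y : ℝ) : 0 ≤ gauss m v y :=
  mul_nonneg (inv_nonneg.2 (Real.sqrt_nonneg _)) (Real.exp_pos _).le

lemma gauss_eq_pdf (m v : ℝ) (hv : 0 ≤ v) :
    gauss m v = ProbabilityTheory.gaussianPDFReal m ⟨v, hv⟩ := rfl

lemma integrable_gauss (m v : ℝ) (hv : 0 ≤ v) : Integrable (gauss m v) := by
  rw [gauss_eq_pdf m v hv]
  exact ProbabilityTheory.integrable_gaussianPDFReal m ⟨v, hv⟩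

lemma integral_gauss (m v : ℝ) (hv : 0 < v) : ∫ y, gauss m v y = 1 := by
  rw [gauss_eq_pdf m v hv.le]
  refine ProbabilityTheory.integral_gaussianPDFReal_eq_one m ?_
  intro h
  exact hv.ne' (congrArg NNReal.toReal h)

/-! ### Auxiliary facts about the majority function `g3` -/

lemma g3_nonneg {a b c : ℝ} (ha0 : 0 ≤ a) (ha1 : a ≤ 1) (hb0 : 0 ≤ b) (hb1 : b ≤ 1)
    (hc0 : 0 ≤ c) (hc1 : c ≤ 1) : 0 ≤ g3 a b c := by
  unfold g3
  nlinarith [mul_nonneg (mul_nonneg ha0 hb0) (sub_nonneg.2 hc1),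
    mul_nonneg (mul_nonneg hb0 hc0) (sub_nonneg.2 ha1),
    mul_nonneg (mul_nonneg hc0 ha0) hb0]

lemma g3_le_one {a b c : ℝ} (ha0 : 0 ≤ a) (ha1 : a ≤ 1) (hb0 : 0 ≤ b) (hb1 : b ≤ 1)
    (hc0 : 0 ≤ c) (hc1 : c ≤ 1) : g3 a b c ≤ 1 := by
  unfold g3
  nlinarith [mul_nonneg (mul_nonneg (sub_nonneg.2 ha1) (sub_nonneg.2 hb1)) (sub_nonneg.2 hc1),
    mul_nonneg (mul_nonneg ha0 (sub_nonneg.2 hb1)) (sub_nonneg.2 hc1),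
    mul_nonneg (mul_nonneg (sub_nonneg.2 ha1) hb0) (sub_nonneg.2 hc1),
    mul_nonneg (mul_nonneg (sub_nonneg.2 ha1) (sub_nonneg.2 hb1)) hc0]

lemma g3_compl (a b c : ℝ) : g3 (1 - a) (1 - b) (1 - c) = 1 - g3 a b c := by
  unfold g3; ring

lemma g3_perm (a b c : ℝ) : g3 a b c = g3 b a c := by unfold g3; ring
lemma g3_rot (a b c : ℝ) : g3 a b c = g3 c a b := by unfold g3; ring

lemma g3_mono {a b c a' b' c' : ℝ} (ha : a ≤ a') (hb : b ≤ b') (hc : c ≤ c')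
    (ha0 : 0 ≤ a) (hb0 : 0 ≤ b) (hc0 : 0 ≤ c)
    (ha1 : a' ≤ 1) (hb1 : b' ≤ 1) (hc1 : c' ≤ 1) : g3 a b c ≤ g3 a' b' c' := by
  have s1 : g3 a b c ≤ g3 a' b c := by
    unfold g3
    nlinarith [mul_nonneg (sub_nonneg.2 ha) (mul_nonneg hb0 (sub_nonneg.2 (hc.trans hc1))),
      mul_nonneg (sub_nonneg.2 ha) (mul_nonneg hc0 (sub_nonneg.2 (hb.trans hb1)))]
  have s2 : g3 a' b c ≤ g3 a' b' c := by
    unfold g3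
    nlinarith [mul_nonneg (sub_nonneg.2 hb) (mul_nonneg (ha0.trans ha) (sub_nonneg.2 (hc.trans hc1))),
      mul_nonneg (sub_nonneg.2 hb) (mul_nonneg hc0 (sub_nonneg.2 ha1))]
  have s3 : g3 a' b' c ≤ g3 a' b' c' := by
    unfold g3
    nlinarith [mul_nonneg (sub_nonneg.2 hc) (mul_nonneg (ha0.trans ha) (sub_nonneg.2 hb1)),
      mul_nonneg (sub_nonneg.2 hc) (mul_nonneg (hb0.trans hb) (sub_nonneg.2 ha1))]
  linarith

/-- One-slot exchange step for the majority function. -/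
lemma g3_step {p q r s b c b' c' : ℝ}
    (hpr : r ≤ p) (hqs : q ≤ s) (hsum : p + q ≤ r + s)
    (hb2 : b' ≤ b) (hb1 : 1 ≤ b + b') (hbu : b ≤ 1) (hb'0 : 0 ≤ b')
    (hc2 : c' ≤ c) (hc1 : 1 ≤ c + c') (hcu : c ≤ 1) (hc'0 : 0 ≤ c') :
    g3 p b c + g3 q b' c' ≤ g3 r b c + g3 s b' c' := by
  have hA0 : (0:ℝ) ≤ b + c - 2 * b * c := by nlinarith
  have hAA' : b + c - 2 * b * c ≤ b' + c' - 2 * b' * c' := by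
    nlinarith [mul_nonneg (by linarith : (0:ℝ) ≤ (2*b-1) - (2*b'-1))
        (by linarith : (0:ℝ) ≤ (2*c-1) + (2*c'-1)),
      mul_nonneg (by linarith : (0:ℝ) ≤ (2*b-1) + (2*b'-1))
        (by linarith : (0:ℝ) ≤ (2*c-1) - (2*c'-1))]
  have key : (p - r) * (b + c - 2 * b * c) ≤ (s - q) * (b' + c' - 2 * b' * c') := by
    nlinarith [mul_nonneg (by linarith : (0:ℝ) ≤ p - r)
        (by linarith : (0:ℝ) ≤ (b' + c' - 2*b'*c') - (b + c - 2*b*c)),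
      mul_nonneg (by linarith : (0:ℝ) ≤ (s - q) - (p - r)) (hA0.trans hAA')]
  unfold g3 at *
  nlinarith [key]

/-! ### The single-crossing property of the Gaussian kernel difference -/

lemma cosh_key {α β w w' : ℝ} (hβ : 0 ≤ β) (hαβ : β ≤ α) (hw : 0 ≤ w) (hww' : w ≤ w') :
    Real.cosh (β * w') * Real.cosh (α * w) ≤ Real.cosh (α * w') * Real.cosh (β * w) := by
  have hα : 0 ≤ α := hβ.trans hαβ
  have hw' : 0 ≤ w' := hw.trans hww'
  have e1 : 2 * (Real.cosh (α * w') * Real.cosh (β * w))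
      = Real.cosh (α * w' + β * w) + Real.cosh (α * w' - β * w) := by
    rw [Real.cosh_add, Real.cosh_sub]; ring
  have e2 : 2 * (Real.cosh (β * w') * Real.cosh (α * w))
      = Real.cosh (β * w' + α * w) + Real.cosh (β * w' - α * w) := by
    rw [Real.cosh_add, Real.cosh_sub]; ring
  have c1 : Real.cosh (β * w' + α * w) ≤ Real.cosh (α * w' + β * w) := by
    rw [Real.cosh_le_cosh]
    rw [abs_of_nonneg (by positivity), abs_of_nonneg (by positivity)]
    nlinarith [mul_nonneg (by linarith : (0:ℝ) ≤ α - β) (by linarith : (0:ℝ) ≤ w' - w)]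
  have c2 : Real.cosh (β * w' - α * w) ≤ Real.cosh (α * w' - β * w) := by
    rw [Real.cosh_le_cosh]
    have h1 : β * w ≤ α * w' := by nlinarith
    rw [abs_of_nonneg (by linarith : (0:ℝ) ≤ α * w' - β * w)]
    rw [abs_le]
    constructor
    · nlinarith [mul_nonneg (by linarith : (0:ℝ) ≤ α + β) (by linarith : (0:ℝ) ≤ w' - w)]
    · nlinarith [mul_nonneg (by linarith : (0:ℝ) ≤ α - β) (by linarith : (0:ℝ) ≤ w' + w)]
  linarith

lemma gauss_pair {v : ℝ} (hv : 0 < v) (w s : ℝ) :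
    gauss 0 v (w - s) + gauss 0 v (w + s)
      = ((Real.sqrt (2 * Real.pi * v))⁻¹ * (2 * Real.exp (-(w ^ 2) / (2 * v))))
        * (Real.exp (-(s ^ 2) / (2 * v)) * Real.cosh (w * s / v)) := by
  have hv' : v ≠ 0 := hv.ne'
  unfold gauss
  rw [Real.cosh_eq]
  have h1 : -(w - s - 0) ^ 2 / (2 * v)
      = (-(w ^ 2) / (2 * v) + -(s ^ 2) / (2 * v)) + w * s / v := by field_simp; ring
  have h2 : -(w + s - 0) ^ 2 / (2 * v)
      = (-(w ^ 2) / (2 * v) + -(s ^ 2) / (2 * v)) + -(w * s / v) := by field_simp; ring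
  simp only [h1, h2, Real.exp_add]
  ring

lemma psi_cross {v u u' : ℝ} (hv : 0 < v) (hu : 0 ≤ u) (huu' : u ≤ u')
    {w w' : ℝ} (hw : 0 ≤ w) (hww' : w ≤ w')
    (h : 0 ≤ gauss 0 v (w - u') + gauss 0 v (w + u')
        - (gauss 0 v (w - u) + gauss 0 v (w + u))) :
    0 ≤ gauss 0 v (w' - u') + gauss 0 v (w' + u')
        - (gauss 0 v (w' - u) + gauss 0 v (w' + u)) := by
  have hC : ∀ x : ℝ, 0 < (Real.sqrt (2 * Real.pi * v))⁻¹
      * (2 * Real.exp (-(x ^ 2) / (2 * v))) := by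
    intro x
    have : 0 < Real.sqrt (2 * Real.pi * v) := Real.sqrt_pos.2 (by positivity)
    positivity
  rw [gauss_pair hv w u', gauss_pair hv w u] at h
  rw [gauss_pair hv w' u', gauss_pair hv w' u]
  set a : ℝ := Real.exp (-(u ^ 2) / (2 * v)) with ha
  set a' : ℝ := Real.exp (-(u' ^ 2) / (2 * v)) with ha'
  have hapos : 0 < a := Real.exp_pos _
  have ha'pos : 0 < a' := Real.exp_pos _
  have h' : a * Real.cosh (w * u / v) ≤ a' * Real.cosh (w * u' / v) := by
    have hCw := hC w
    nlinarith [h]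
  have key : Real.cosh (w' * u / v) * Real.cosh (w * u' / v)
      ≤ Real.cosh (w' * u' / v) * Real.cosh (w * u / v) := by
    have hβ : 0 ≤ u / v := by positivity
    have hαβ : u / v ≤ u' / v := by gcongr
    have := cosh_key hβ hαβ hw hww'
    convert this using 3 <;> ring
  have goal' : a * Real.cosh (w' * u / v) ≤ a' * Real.cosh (w' * u' / v) := by
    have p1 : 0 < Real.cosh (w * u / v) := Real.cosh_pos _
    have p2 : 0 < Real.cosh (w * u' / v) := Real.cosh_pos _
    have p3 : 0 < Real.cosh (w' * u' / v) := Real.cosh_pos _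
    nlinarith [mul_le_mul_of_nonneg_left key hapos.le,
      mul_le_mul_of_nonneg_left h' p3.le]
  have hCw' := hC w'
  nlinarith [goal']

/-! ### The induction package -/

/-- The package of properties propagated through the tree recursion. -/
structure Good (F : ℝ → ℝ) : Prop where
  nonneg : ∀ z, 0 ≤ F z
  le_one : ∀ z, F z ≤ 1
  symm : ∀ z, F z + F (-z) = 1
  mono : Monotone F
  conc : ∀ x u u', 0 ≤ x → 0 ≤ u → u ≤ u' →
    F (x + u') + F (x - u') ≤ F (x + u) + F (x - u)

/-- Smoothing a bounded, monotone, symmetric function with window-concavity on the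
positive half-line by a Gaussian kernel produces a `Good` function. -/
theorem good_conv {v : ℝ} (hv : 0 < v) {G : ℝ → ℝ}
    (hg0 : ∀ y, 0 ≤ G y) (hg1 : ∀ y, G y ≤ 1) (hgs : ∀ y, y ≠ 0 → G y + G (-y) = 1)
    (hgm : Monotone G)
    (hgq : ∀ x u u', 0 ≤ x → 0 < u → u ≤ u' →
      G (x + u') + G (x - u') ≤ G (x + u) + G (x - u)) :
    Good (fun z => ∫ y, G y * gauss z v y) := by
  have hGmeas : Measurable G := hgm.measurable
  have hGbd : ∀ y, ‖G y‖ ≤ 1 := by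
    intro y; rw [Real.norm_eq_abs, abs_le]; exact ⟨by linarith [hg0 y], hg1 y⟩
  have hint : ∀ z, Integrable (fun y => G y * gauss z v y) := fun z =>
    (integrable_gauss z v hv.le).bdd_mul hGmeas.aestronglyMeasurable (ae_of_all _ hGbd)
  have hgshift : ∀ s : ℝ, Integrable (fun w => gauss 0 v (w - s)) := by
    intro s
    have : (fun w => gauss 0 v (w - s)) = gauss s v := by
      funext w; rw [← gauss_eq]
    rw [this]; exact integrable_gauss s v hv.le
  have hgshift' : ∀ s : ℝ, Integrable (fun w => gauss 0 v (w + s)) := by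
    intro s; simpa [sub_neg_eq_add] using hgshift (-s)
  have hint2 : ∀ x s : ℝ, Integrable (fun w => G (w + x) * gauss 0 v (w - s)) := by
    intro x s
    exact (hgshift s).bdd_mul ((hGmeas.comp (measurable_add_const x)).aestronglyMeasurable)
      (ae_of_all _ fun w => hGbd _)
  have key : ∀ z x : ℝ, (∫ y, G y * gauss z v y) = ∫ w, G (w + x) * gauss 0 v (w - (z - x)) := by
    intro z x
    rw [← integral_add_right_eq_self (fun y => G y * gauss z v y) x]
    congr 1; funext w
    rw [gauss_eq]
    have h : w + x - z = w - (z - x) := by ring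
    rw [h]
  constructor
  · intro z
    exact integral_nonneg fun y => mul_nonneg (hg0 y) (gauss_nonneg z v y)
  · intro z
    calc (∫ y, G y * gauss z v y) ≤ ∫ y, gauss z v y := by
          refine integral_mono (hint z) (integrable_gauss z v hv.le) fun y => ?_
          have := gauss_nonneg z v y
          nlinarith [hg1 y]
      _ = 1 := integral_gauss z v hv
  · intro z
    have h1 : (∫ y, G y * gauss (-z) v y) = ∫ y, G (-y) * gauss z v y := by
      rw [← integral_neg_eq_self (fun y => G (-y) * gauss z v y) volume]
      congr 1; funext y
      rw [neg_neg]
      congr 1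
      simp only [gauss]
      ring_nf
    have h2 : Integrable (fun y => G (-y) * gauss z v y) :=
      (integrable_gauss z v hv.le).bdd_mul ((hGmeas.comp measurable_neg).aestronglyMeasurable)
        (ae_of_all _ fun y => hGbd _)
    show (∫ y, G y * gauss z v y) + (∫ y, G y * gauss (-z) v y) = 1
    rw [h1, ← integral_add (hint z) h2]
    have h3 : (∫ y, (G y * gauss z v y + G (-y) * gauss z v y)) = ∫ y, gauss z v y := by
      refine integral_congr_ae ?_
      have h0 : ∀ᵐ y : ℝ, y ≠ 0 := by
        rw [ae_iff]
        simpa using measure_singleton (0 : ℝ)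
      filter_upwards [h0] with y hy
      rw [← add_mul, hgs y hy, one_mul]
    rw [h3, integral_gauss z v hv]
  · intro z z' hzz'
    show (∫ y, G y * gauss z v y) ≤ ∫ y, G y * gauss z' v y
    rw [key z z, key z' z']
    simp only [sub_self, sub_zero]
    refine integral_mono (by simpa using hint2 z 0) (by simpa using hint2 z' 0) fun w => ?_
    exact mul_le_mul_of_nonneg_right (hgm (by linarith)) (gauss_nonneg 0 v w)
  · intro x u u' hx hu huu'
    show (∫ y, G y * gauss (x + u') v y) + (∫ y, G y * gauss (x - u') v y)
      ≤ (∫ y, G y * gauss (x + u) v y) + (∫ y, G y * gauss (x - u) v y)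
    set ψ : ℝ → ℝ := fun w =>
      gauss 0 v (w - u') + gauss 0 v (w + u') - (gauss 0 v (w - u) + gauss 0 v (w + u)) with hψ
    have hψint : Integrable ψ :=
      ((hgshift u').add (hgshift' u')).sub ((hgshift u).add (hgshift' u))
    have hψ_even : ∀ w, ψ (-w) = ψ w := by
      intro w
      simp only [hψ]
      rw [show -w - u' = -(w + u') by ring, show -w + u' = -(w - u') by ring,
        show -w - u = -(w + u) by ring, show -w + u = -(w - u) by ring,
        gauss_even, gauss_even, gauss_even, gauss_even]
      ring
    have hint2' : ∀ s : ℝ, Integrable (fun w => G (w + x) * gauss 0 v (w + s)) := by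
      intro s; simpa [sub_neg_eq_add] using hint2 x (-s)
    have hA1 : Integrable
        (fun w => G (w + x) * gauss 0 v (w - u') + G (w + x) * gauss 0 v (w + u')) :=
      (hint2 x u').add (hint2' u')
    have hA2 : Integrable
        (fun w => G (w + x) * gauss 0 v (w - u) + G (w + x) * gauss 0 v (w + u)) :=
      (hint2 x u).add (hint2' u)
    have hintψG : Integrable (fun w => G (w + x) * ψ w) := by
      have := hA1.sub hA2
      refine this.congr (ae_of_all _ fun w => ?_)
      simp only [Pi.sub_apply, hψ]; ring
    have hD : (∫ y, G y * gauss (x + u') v y) + (∫ y, G y * gauss (x - u') v y)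
        - ((∫ y, G y * gauss (x + u) v y) + (∫ y, G y * gauss (x - u) v y))
        = ∫ w, G (w + x) * ψ w := by
      rw [key (x + u') x, key (x - u') x, key (x + u) x, key (x - u) x,
        show x + u' - x = u' by ring, show x - u' - x = -u' by ring,
        show x + u - x = u by ring, show x - u - x = -u by ring]
      rw [← integral_add (hint2 x u') (hint2 x (-u')),
        ← integral_add (hint2 x u) (hint2 x (-u)),
        ← integral_sub (by exact (hint2 x u').add (hint2 x (-u')))
          (by exact (hint2 x u).add (hint2 x (-u)))]
      congr 1; funext w; simp only [hψ, sub_neg_eq_add]; ring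
    have hfold : ∀ f : ℝ → ℝ, Integrable f →
        (∫ w, f w) = ∫ w in Set.Ioi (0:ℝ), (f w + f (-w)) := by
      intro f hf
      have h1 : (∫ w in Set.Iic (0:ℝ), f w) = ∫ w in Set.Ioi (0:ℝ), f (-w) := by
        rw [integral_comp_neg_Ioi]; norm_num
      rw [← intervalIntegral.integral_Iic_add_Ioi hf.integrableOn hf.integrableOn, h1,
        ← integral_add (hf.comp_neg.integrableOn) hf.integrableOn]
      refine setIntegral_congr_fun measurableSet_Ioi fun w _ => ?_
      ring
    have hψIoi : (∫ w in Set.Ioi (0:ℝ), ψ w) = 0 := by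
      have hval : ∀ s : ℝ, (∫ w, gauss 0 v (w - s)) = 1 := by
        intro s
        have : (fun w => gauss 0 v (w - s)) = gauss s v := by funext w; rw [← gauss_eq]
        rw [this]; exact integral_gauss s v hv
      have hval' : ∀ s : ℝ, (∫ w, gauss 0 v (w + s)) = 1 := by
        intro s; simpa [sub_neg_eq_add] using hval (-s)
      have hB1 : Integrable (fun w => gauss 0 v (w - u') + gauss 0 v (w + u')) :=
        (hgshift u').add (hgshift' u')
      have hB2 : Integrable (fun w => gauss 0 v (w - u) + gauss 0 v (w + u)) :=
        (hgshift u).add (hgshift' u)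
      have htot : (∫ w, ψ w) = 0 := by
        simp only [hψ]
        rw [integral_sub hB1 hB2,
          integral_add (hgshift u') (hgshift' u'), integral_add (hgshift u) (hgshift' u),
          hval u', hval' u', hval u, hval' u]
        ring
      have h2 := hfold ψ hψint
      rw [htot] at h2
      have h3 : (∫ w in Set.Ioi (0:ℝ), (ψ w + ψ (-w))) = 2 * ∫ w in Set.Ioi (0:ℝ), ψ w := by
        rw [← integral_const_mul]
        refine setIntegral_congr_fun measurableSet_Ioi fun w _ => ?_
        rw [hψ_even]; ring
      rw [h3] at h2
      linarith
    have hD2 : (∫ w, G (w + x) * ψ w)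
        = ∫ w in Set.Ioi (0:ℝ), (G (x + w) + G (x - w)) * ψ w := by
      rw [hfold _ hintψG]
      refine setIntegral_congr_fun measurableSet_Ioi fun w _ => ?_
      rw [hψ_even w, show -w + x = x - w by ring, show w + x = x + w by ring]
      ring
    set S : ℝ → ℝ := fun w => G (x + w) + G (x - w) with hS
    set A : Set ℝ := {w | 0 < w ∧ 0 < ψ w} with hA
    have hcross : ∀ a ∈ A, ∀ w : ℝ, 0 < w → ψ w < 0 → S a ≤ S w := by
      intro a ha w hw hψw
      obtain ⟨hapos, hψa⟩ := ha
      have hwa : w ≤ a := by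
        by_contra hcon
        push_neg at hcon
        have := psi_cross hv hu huu' (le_of_lt hapos) (le_of_lt hcon) (le_of_lt hψa)
        simp only [hψ] at hψw
        linarith
      exact hgq x w a hx hw hwa
    have hSb : ∀ w, S w ≤ 2 := fun w => by
      have := hg1 (x + w); have := hg1 (x - w); simp only [hS]; linarith
    have hS0 : ∀ w, 0 ≤ S w := fun w => by
      have := hg0 (x + w); have := hg0 (x - w); simp only [hS]; linarith
    obtain ⟨c, hc⟩ : ∃ c : ℝ, ∀ w ∈ Set.Ioi (0:ℝ), S w * ψ w ≤ c * ψ w := by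
      by_cases hAne : A.Nonempty
      · refine ⟨sSup (S '' A), fun w hw => ?_⟩
        have hbdd : BddAbove (S '' A) := ⟨2, fun y hy => by
          obtain ⟨a, _, rfl⟩ := hy; exact hSb a⟩
        rcases lt_trichotomy (ψ w) 0 with hneg | hzero | hpos
        · have hcle : sSup (S '' A) ≤ S w := by
            refine csSup_le (hAne.image S) ?_
            rintro y ⟨a, ha, rfl⟩
            exact hcross a ha w hw hneg
          nlinarith
        · rw [hzero]; simp
        · have hmem : w ∈ A := ⟨hw, hpos⟩
          have : S w ≤ sSup (S '' A) := le_csSup hbdd ⟨w, hmem, rfl⟩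
          nlinarith
      · refine ⟨0, fun w hw => ?_⟩
        rcases lt_trichotomy (ψ w) 0 with hneg | hzero | hpos
        · nlinarith [hS0 w]
        · rw [hzero]; simp
        · exact absurd ⟨hw, hpos⟩ (fun h => hAne ⟨w, h⟩)
    have hSmeas : Measurable S := by
      have h1 : Measurable fun w => G (x + w) := hGmeas.comp (measurable_const_add x)
      have h2 : Measurable fun w => G (x - w) := hGmeas.comp (measurable_const.sub measurable_id)
      exact h1.add h2
    have hSψint : IntegrableOn (fun w => S w * ψ w) (Set.Ioi 0) :=
      (hψint.integrableOn).bdd_mul hSmeas.aestronglyMeasurable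
        (ae_of_all _ fun w => by rw [Real.norm_eq_abs, abs_le]; exact ⟨by linarith [hS0 w], hSb w⟩)
    have hcψint : IntegrableOn (fun w => c * ψ w) (Set.Ioi 0) := hψint.integrableOn.const_mul c
    have hle : (∫ w in Set.Ioi (0:ℝ), S w * ψ w) ≤ ∫ w in Set.Ioi (0:ℝ), c * ψ w :=
      setIntegral_mono_on hSψint hcψint measurableSet_Ioi hc
    have hfin : (∫ w in Set.Ioi (0:ℝ), c * ψ w) = 0 := by
      rw [integral_const_mul, hψIoi, mul_zero]
    have hDle : (∫ y, G y * gauss (x + u') v y) + (∫ y, G y * gauss (x - u') v y)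
        - ((∫ y, G y * gauss (x + u) v y) + (∫ y, G y * gauss (x - u) v y)) ≤ 0 := by
      rw [hD, hD2]
      calc (∫ w in Set.Ioi (0:ℝ), (G (x + w) + G (x - w)) * ψ w)
          = ∫ w in Set.Ioi (0:ℝ), S w * ψ w := rfl
        _ ≤ ∫ w in Set.Ioi (0:ℝ), c * ψ w := hle
        _ = 0 := hfin
    linarith

/-! ### Combining the votes of the three subtrees -/

lemma good_facts {P : ℝ → ℝ} (h : Good P) {x u u' : ℝ} (hx : 0 ≤ x) (hu : 0 ≤ u)
    (huu' : u ≤ u') :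
    P (x + u) ≤ P (x + u') ∧ P (x - u') ≤ P (x - u) ∧
      P (x + u') + P (x - u') ≤ P (x + u) + P (x - u) ∧
      1 ≤ P (x + u') + P (x - u') ∧ 1 ≤ P (x + u) + P (x - u) := by
  refine ⟨h.mono (by linarith), h.mono (by linarith), h.conc x u u' hx hu huu', ?_, ?_⟩
  · have h1 : P (u' - x) + P (-(u' - x)) = 1 := h.symm (u' - x)
    have h2 : P (u' - x) ≤ P (x + u') := h.mono (by linarith)
    have h3 : -(u' - x) = x - u' := by ring
    rw [h3] at h1
    linarith
  · have h1 : P (u - x) + P (-(u - x)) = 1 := h.symm (u - x)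
    have h2 : P (u - x) ≤ P (x + u) := h.mono (by linarith)
    have h3 : -(u - x) = x - u := by ring
    rw [h3] at h1
    linarith

lemma g3_Q {P₁ P₂ P₃ : ℝ → ℝ} (h1 : Good P₁) (h2 : Good P₂) (h3 : Good P₃)
    {x u u' : ℝ} (hx : 0 ≤ x) (hu : 0 ≤ u) (huu' : u ≤ u') :
    g3 (P₁ (x + u')) (P₂ (x + u')) (P₃ (x + u'))
      + g3 (P₁ (x - u')) (P₂ (x - u')) (P₃ (x - u'))
    ≤ g3 (P₁ (x + u)) (P₂ (x + u)) (P₃ (x + u))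
      + g3 (P₁ (x - u)) (P₂ (x - u)) (P₃ (x - u)) := by
  obtain ⟨m1, m1', c1, o1, o1'⟩ := good_facts h1 hx hu huu'
  obtain ⟨m2, m2', c2, o2, o2'⟩ := good_facts h2 hx hu huu'
  obtain ⟨m3, m3', c3, o3, o3'⟩ := good_facts h3 hx hu huu'
  set p1 := P₁ (x + u'); set q1 := P₁ (x - u'); set r1 := P₁ (x + u); set s1 := P₁ (x - u)
  set p2 := P₂ (x + u'); set q2 := P₂ (x - u'); set r2 := P₂ (x + u); set s2 := P₂ (x - u)
  set p3 := P₃ (x + u'); set q3 := P₃ (x - u'); set r3 := P₃ (x + u); set s3 := P₃ (x - u)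
  have step1 : g3 p1 p2 p3 + g3 q1 q2 q3 ≤ g3 r1 p2 p3 + g3 s1 q2 q3 :=
    g3_step m1 m1' c1 (h2.mono (by linarith)) o2 (h2.le_one _) (h2.nonneg _)
      (h3.mono (by linarith)) o3 (h3.le_one _) (h3.nonneg _)
  have step2 : g3 r1 p2 p3 + g3 s1 q2 q3 ≤ g3 r1 r2 p3 + g3 s1 s2 q3 := by
    rw [g3_perm r1 p2 p3, g3_perm s1 q2 q3, g3_perm r1 r2 p3, g3_perm s1 s2 q3]
    exact g3_step m2 m2' c2 (h1.mono (by linarith)) o1' (h1.le_one _) (h1.nonneg _)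
      (h3.mono (by linarith)) o3 (h3.le_one _) (h3.nonneg _)
  have step3 : g3 r1 r2 p3 + g3 s1 s2 q3 ≤ g3 r1 r2 r3 + g3 s1 s2 s3 := by
    rw [g3_rot r1 r2 p3, g3_rot s1 s2 q3, g3_rot r1 r2 r3, g3_rot s1 s2 s3]
    exact g3_step m3 m3' c3 (h1.mono (by linarith)) o1' (h1.le_one _) (h1.nonneg _)
      (h2.mono (by linarith)) o2' (h2.le_one _) (h2.nonneg _)
  linarith

/-! ### The main induction -/

theorem good_voteP : ∀ (T : TTree) (t : ℝ), T.compat t → Good (voteP T t) := by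
  intro T
  induction T with
  | leaf =>
    intro t ht
    have ht' : (0:ℝ) < 2 * t := by
      have : (0:ℝ) < t := ht
      linarith
    set ind : ℝ → ℝ := Set.indicator (Set.Ioi (0:ℝ)) (fun _ => (1:ℝ)) with hind
    have hrw : voteP TTree.leaf t = fun z => ∫ y, ind y * gauss z (2 * t) y := by
      funext z
      show (∫ y in Set.Ioi (0:ℝ), gauss z (2 * t) y) = _
      rw [← integral_indicator measurableSet_Ioi]
      congr 1; funext y
      by_cases h : y ∈ Set.Ioi (0:ℝ) <;>
        simp [hind, Set.indicator_apply, h]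
    rw [hrw]
    refine good_conv ht' ?_ ?_ ?_ ?_ ?_
    · intro y; exact Set.indicator_nonneg (fun _ _ => zero_le_one) y
    · intro y
      by_cases h : y ∈ Set.Ioi (0:ℝ) <;> simp [hind, Set.indicator_apply, h]
    · intro y hy
      rcases lt_trichotomy y 0 with h | h | h
      · have h1 : ¬ (0:ℝ) < y := by linarith
        have h2 : (0:ℝ) < -y := by linarith
        simp [hind, Set.indicator_apply, h1, h2]
      · exact absurd h hy
      · have h1 : ¬ (0:ℝ) < -y := by linarith
        simp [hind, Set.indicator_apply, h, h1]
    · intro a b hab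
      by_cases ha : a ∈ Set.Ioi (0:ℝ)
      · have hb : b ∈ Set.Ioi (0:ℝ) := lt_of_lt_of_le ha hab
        simp [hind, Set.indicator_apply, ha, hb]
      · have : ind a = 0 := Set.indicator_of_notMem ha _
        rw [this]
        exact Set.indicator_nonneg (fun _ _ => zero_le_one) b
    · intro x u u' hx hu huu'
      have h1 : x + u ∈ Set.Ioi (0:ℝ) := by simp; linarith
      have h2 : x + u' ∈ Set.Ioi (0:ℝ) := by simp; linarith
      have hmono : ind (x - u') ≤ ind (x - u) := by
        by_cases ha : x - u' ∈ Set.Ioi (0:ℝ)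
        · have hb : x - u ∈ Set.Ioi (0:ℝ) := by
            simp only [Set.mem_Ioi] at ha ⊢; linarith
          simp [hind, Set.indicator_apply, ha, hb]
        · have : ind (x - u') = 0 := Set.indicator_of_notMem ha _
          rw [this]
          exact Set.indicator_nonneg (fun _ _ => zero_le_one) _
      have e1 : ind (x + u) = 1 := Set.indicator_of_mem h1 _
      have e2 : ind (x + u') = 1 := Set.indicator_of_mem h2 _
      rw [e1, e2]
      linarith
  | node τ T₁ T₂ T₃ ih₁ ih₂ ih₃ =>
    intro t ht
    obtain ⟨hτ, hτt, hc1, hc2, hc3⟩ := ht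
    have hG1 := ih₁ (t - τ) hc1
    have hG2 := ih₂ (t - τ) hc2
    have hG3 := ih₃ (t - τ) hc3
    set G : ℝ → ℝ := fun y =>
      g3 (voteP T₁ (t - τ) y) (voteP T₂ (t - τ) y) (voteP T₃ (t - τ) y) with hGdef
    have hrw : voteP (TTree.node τ T₁ T₂ T₃) t = fun z => ∫ y, G y * gauss z (2 * τ) y := by
      funext z
      rfl
    rw [hrw]
    refine good_conv (by linarith) ?_ ?_ ?_ ?_ ?_
    · intro y
      exact g3_nonneg (hG1.nonneg y) (hG1.le_one y) (hG2.nonneg y) (hG2.le_one y)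
        (hG3.nonneg y) (hG3.le_one y)
    · intro y
      exact g3_le_one (hG1.nonneg y) (hG1.le_one y) (hG2.nonneg y) (hG2.le_one y)
        (hG3.nonneg y) (hG3.le_one y)
    · intro y _
      have e1 : voteP T₁ (t - τ) (-y) = 1 - voteP T₁ (t - τ) y := by
        have := hG1.symm y; linarith
      have e2 : voteP T₂ (t - τ) (-y) = 1 - voteP T₂ (t - τ) y := by
        have := hG2.symm y; linarith
      have e3 : voteP T₃ (t - τ) (-y) = 1 - voteP T₃ (t - τ) y := by
        have := hG3.symm y; linarith
      simp only [hGdef, e1, e2, e3, g3_compl]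
      ring
    · intro a b hab
      exact g3_mono (hG1.mono hab) (hG2.mono hab) (hG3.mono hab)
        (hG1.nonneg a) (hG2.nonneg a) (hG3.nonneg a)
        (hG1.le_one b) (hG2.le_one b) (hG3.le_one b)
    · intro x u u' hx hu huu'
      exact g3_Q hG1 hG2 hG3 hx hu.le huu'

theorem voteP_concavity (t : ℝ) (ht : 0 < t) (T : TTree) (hT : T.compat t)
    (x η : ℝ) (hx : 0 ≤ x) (hη : 0 < η) :
    voteP T t (x + η) - voteP T t x ≤ voteP T t x - voteP T t (x - η) := by
  have hG := good_voteP T t hT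
  have h := hG.conc x 0 η hx le_rfl hη.le
  rw [add_zero, sub_zero] at h
  linarith
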